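/- Under the stated hypotheses, lim_{ρ→c⁺} r(ρ) A(ρ) = 2(c − 3m)/(3 r'(c)). Consequently, for c ≠ 3m, A(ρ) is asymptotic to (2(c−3m)/(3 r'(c))) · 1/r(ρ) as ρ → c⁺. -/

import Mathlib

open MeasureTheory Filter

set_option maxHeartbeats 1000000 in
private lemma auxB (c m : ℝ)
    (r : ℝ → ℝ) (R : ℝ) (hR : 0 < R)
    (hslope : Tendsto (fun ρ => r ρ / (ρ - c)) (nhdsWithin c (Set.Ioi c)) (nhds R))
    (hrpos : ∀ ρ ∈ Set.Ioi c, 0 < r ρ)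
    (hint : ∀ ρ ∈ Set.Ioi c,
      IntegrableOn (fun z => (z - 3 * m) / r z ^ 4) (Set.Ioi ρ)) :
    Tendsto (fun ρ => (ρ - c)^3 * ∫ z in Set.Ioi ρ, (z - 3 * m) / r z ^ 4)
      (nhdsWithin c (Set.Ioi c)) (nhds ((c - 3*m)/R^4 / 3)) := by
  set f : ℝ → ℝ := fun z => (z - 3 * m) / r z ^ 4 with hf
  set φ : ℝ → ℝ := fun z => (z - 3*m) * ((z - c) / r z)^4 with hφdef
  set K : ℝ := (c - 3*m)/R^4 with hK
  -- φ tends to K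
  have hφ : Tendsto φ (nhdsWithin c (Set.Ioi c)) (nhds K) := by
    have h1 : Tendsto (fun z : ℝ => z - 3*m) (nhdsWithin c (Set.Ioi c)) (nhds (c - 3*m)) :=
      tendsto_nhdsWithin_of_tendsto_nhds ((continuous_id.sub continuous_const).tendsto c)
    have h2 : Tendsto (fun z => ((z - c) / r z)^4) (nhdsWithin c (Set.Ioi c)) (nhds ((R⁻¹)^4)) := by
      have := (hslope.inv₀ (ne_of_gt hR)).pow 4
      refine this.congr fun x => ?_
      rw [inv_div]
    have := h1.mul h2
    simpa [hK, hφdef, div_eq_mul_inv, inv_pow] using this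
  rw [Metric.tendsto_nhds]
  intro ε hε
  -- get d with bound on Ioc c d
  have hev : ∀ᶠ z in nhdsWithin c (Set.Ioi c), |φ z - K| ≤ ε/2 := by
    have := hφ.eventually (Metric.closedBall_mem_nhds K (by positivity : (0:ℝ) < ε/2))
    simpa [Metric.mem_closedBall, Real.dist_eq] using this
  obtain ⟨d, hd, hφd⟩ := mem_nhdsGT_iff_exists_Ioc_subset.mp hev
  rw [Set.mem_Ioi] at hd
  set Cd : ℝ := ∫ z in Set.Ioi d, f z with hCd
  set M : ℝ := |K|/(3*(d-c)^3) + |Cd| with hM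
  -- eventually small
  have he2 : ∀ᶠ ρ in nhdsWithin c (Set.Ioi c), (ρ-c)^3 * M < ε/2 := by
    have ht : Tendsto (fun ρ : ℝ => (ρ-c)^3 * M) (nhdsWithin c (Set.Ioi c)) (nhds 0) := by
      have : Tendsto (fun ρ : ℝ => (ρ-c)^3 * M) (nhds c) (nhds ((c-c)^3 * M)) := Continuous.tendsto (by continuity) c
      simpa using tendsto_nhdsWithin_of_tendsto_nhds this
    exact ht.eventually (eventually_lt_nhds (by positivity))
  have he1 : ∀ᶠ ρ in nhdsWithin c (Set.Ioi c), ρ ∈ Set.Ioo c d :=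
    Filter.eventually_of_mem (Ioo_mem_nhdsGT_of_mem ⟨le_rfl, hd⟩) (fun x hx => hx)
  filter_upwards [he1, he2] with ρ hρ hρ2
  obtain ⟨hρc, hρd⟩ := hρ
  have ht : 0 < ρ - c := sub_pos.mpr hρc
  have htd : 0 < d - c := sub_pos.mpr hd
  rw [Real.dist_eq]
  -- split integral
  have hsub1 : Set.Ioc ρ d ⊆ Set.Ioi ρ := Set.Ioc_subset_Ioi_self
  have hsub2 : Set.Ioi d ⊆ Set.Ioi ρ := Set.Ioi_subset_Ioi hρd.le
  have hintρ := hint ρ hρc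
  have hsplit : ∫ z in Set.Ioi ρ, f z = (∫ z in Set.Ioc ρ d, f z) + Cd := by
    rw [hCd, ← setIntegral_union (Set.Ioc_disjoint_Ioi le_rfl) measurableSet_Ioi
      (hintρ.mono_set hsub1) (hintρ.mono_set hsub2), Set.Ioc_union_Ioi_eq_Ioi hρd.le]
  -- integrability of the model
  set g : ℝ → ℝ := fun z => ((z - c)^4)⁻¹ with hg
  have hgcont : ContinuousOn g (Set.Icc ρ d) := by
    apply ContinuousOn.inv₀
    · fun_prop
    · intro z hz
      have : 0 < z - c := sub_pos.mpr (lt_of_lt_of_le hρc hz.1)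
      positivity
  have hgint : IntegrableOn g (Set.Ioc ρ d) :=
    (hgcont.integrableOn_Icc).mono_set Set.Ioc_subset_Icc_self
  set J4 : ℝ := ∫ z in Set.Ioc ρ d, g z with hJ4
  -- value of J4
  have hJ4val : J4 = (((ρ-c)^3)⁻¹ - ((d-c)^3)⁻¹)/3 := by
    have h0 : (0:ℝ) ∉ Set.uIcc (ρ - c) (d - c) := Set.notMem_uIcc_of_lt ht htd
    have hz : ∀ x : ℝ, x ≠ 0 → (x^4)⁻¹ = x ^ (-4 : ℤ) := by
      intro x hx
      rw [zpow_neg, ← zpow_natCast]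
      norm_num
    calc J4 = ∫ z in ρ..d, ((z - c)^4)⁻¹ := (intervalIntegral.integral_of_le hρd.le).symm
      _ = ∫ z in ρ..d, (z - c) ^ (-4 : ℤ) := by
          apply intervalIntegral.integral_congr
          intro z hz'
          rw [Set.uIcc_of_le hρd.le] at hz'
          exact hz _ (ne_of_gt (sub_pos.mpr (lt_of_lt_of_le hρc hz'.1)))
      _ = ∫ x in (ρ - c)..(d - c), x ^ (-4 : ℤ) :=
          intervalIntegral.integral_comp_sub_right (fun x => x ^ (-4 : ℤ)) c
      _ = ((d-c) ^ (-4 + 1 : ℤ) - (ρ-c) ^ (-4 + 1 : ℤ)) / ((-4 : ℤ) + 1) :=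
          integral_zpow (Or.inr ⟨by norm_num, h0⟩)
      _ = (((ρ-c)^3)⁻¹ - ((d-c)^3)⁻¹)/3 := by
          rw [show ((-4:ℤ)+1) = (-3:ℤ) by norm_num]
          rw [show ((ρ-c):ℝ)^(-3:ℤ) = ((ρ-c)^3)⁻¹ by rw [zpow_neg]; norm_cast]
          rw [show ((d-c):ℝ)^(-3:ℤ) = ((d-c)^3)⁻¹ by rw [zpow_neg]; norm_cast]
          push_cast
          ring
  have hJ4nonneg : 0 ≤ J4 := by
    rw [hJ4val]
    have : ((d-c)^3)⁻¹ ≤ ((ρ-c)^3)⁻¹ := by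
      apply inv_anti₀ (by positivity)
      have : ρ - c ≤ d - c := by linarith
      exact pow_le_pow_left₀ ht.le this 3
    linarith
  have hJ4le : (ρ-c)^3 * J4 ≤ 1/3 := by
    rw [hJ4val]
    have h1 : 0 ≤ (ρ-c)^3 * ((d-c)^3)⁻¹ := by positivity
    have h2 : (ρ-c)^3 * ((ρ-c)^3)⁻¹ = 1 := mul_inv_cancel₀ (by positivity)
    nlinarith
  -- pointwise bound
  have hbound : ∀ z ∈ Set.Ioc ρ d, |f z - K * g z| ≤ (ε/2) * g z := by
    intro z hz
    have hzc : 0 < z - c := sub_pos.mpr (lt_of_lt_of_le hρc hz.1.le)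
    have hrz : 0 < r z := hrpos z (lt_of_lt_of_le hρc hz.1.le)
    have hfz : f z = φ z * g z := by
      simp only [hf, hφdef, hg]
      field_simp
    have : f z - K * g z = (φ z - K) * g z := by rw [hfz]; ring
    rw [this, abs_mul, abs_of_nonneg (by positivity : (0:ℝ) ≤ g z)]
    exact mul_le_mul_of_nonneg_right (hφd ⟨lt_of_lt_of_le hρc hz.1.le, hz.2⟩) (by positivity)
  -- integral bound
  have hfInt : IntegrableOn f (Set.Ioc ρ d) := hintρ.mono_set hsub1
  set I : ℝ := ∫ z in Set.Ioc ρ d, f z with hI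
  have hIbound : |I - K * J4| ≤ (ε/2) * J4 := by
    have heq : I - K * J4 = ∫ z in Set.Ioc ρ d, (f z - K * g z) := by
      rw [integral_sub hfInt (hgint.const_mul K), integral_const_mul]
    have hae : ∀ᵐ z ∂(volume.restrict (Set.Ioc ρ d)), ‖f z - K * g z‖ ≤ (ε/2) * g z := by
      rw [ae_restrict_iff' measurableSet_Ioc]
      exact .of_forall fun z hz => by simpa [Real.norm_eq_abs] using hbound z hz
    have := norm_integral_le_of_norm_le (hgint.const_mul (ε/2)) hae
    rw [integral_const_mul] at this
    rw [heq]
    simpa [Real.norm_eq_abs] using this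
  have hne1 : ((ρ-c)^3 : ℝ) ≠ 0 := by positivity
  have hne2 : ((d-c)^3 : ℝ) ≠ 0 := by positivity
  have hident : (ρ-c)^3 * (∫ z in Set.Ioi ρ, f z) - K/3 =
      (ρ-c)^3 * (I - K*J4) + (-(K * ((ρ-c)^3 * ((d-c)^3)⁻¹) / 3)) + (ρ-c)^3 * Cd := by
    rw [hsplit, hJ4val]
    field_simp
    ring
  have e1 : |(ρ-c)^3 * (I - K*J4)| ≤ (ρ-c)^3 * (ε/2 * J4) := by
    rw [abs_mul, abs_of_nonneg (by positivity : (0:ℝ) ≤ (ρ-c)^3)]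
    exact mul_le_mul_of_nonneg_left hIbound (by positivity)
  have e2 : |(-(K * ((ρ-c)^3 * ((d-c)^3)⁻¹) / 3))| = |K| * ((ρ-c)^3 * ((d-c)^3)⁻¹)/3 := by
    rw [abs_neg, abs_div, abs_mul, abs_of_nonneg (by positivity : (0:ℝ) ≤ (ρ-c)^3 * ((d-c)^3)⁻¹)]
    norm_num
  have e3 : |(ρ-c)^3 * Cd| = (ρ-c)^3 * |Cd| := by
    rw [abs_mul, abs_of_nonneg (by positivity : (0:ℝ) ≤ (ρ-c)^3)]
  have tri := abs_add_three ((ρ-c)^3 * (I - K*J4)) (-(K * ((ρ-c)^3 * ((d-c)^3)⁻¹) / 3)) ((ρ-c)^3 * Cd)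
  have h4 : (ρ-c)^3 * (ε/2 * J4) ≤ ε/6 := by nlinarith [hJ4le, hJ4nonneg, hε.le]
  have h5 : |K| * ((ρ-c)^3 * ((d-c)^3)⁻¹)/3 + (ρ-c)^3 * |Cd| = (ρ-c)^3 * M := by
    rw [hM, mul_add, div_eq_mul_inv (|K|), mul_inv]
    ring
  rw [hident]
  calc |(ρ-c)^3 * (I - K*J4) + (-(K * ((ρ-c)^3 * ((d-c)^3)⁻¹) / 3)) + (ρ-c)^3 * Cd|
      ≤ |(ρ-c)^3 * (I - K*J4)| + |(-(K * ((ρ-c)^3 * ((d-c)^3)⁻¹) / 3))| + |(ρ-c)^3 * Cd| := tri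
    _ ≤ ε/6 + (ρ-c)^3 * M := by rw [e2, e3]; linarith [e1, h4, h5.ge]
    _ < ε := by linarith


/-- `lim_{ρ→c⁺} r(ρ) A(ρ) = 2(c − 3m)/(3 r'(c))`; consequently for `c ≠ 3m`,
`A(ρ)` is asymptotic to `(2(c−3m)/(3 r'(c))) / r(ρ)` as `ρ → c⁺`. -/
theorem stmt3 (c m : ℝ) (hc : 0 < c)
    (r r' : ℝ → ℝ)
    (hr : ∀ ρ ∈ Set.Ici c, HasDerivWithinAt r (r' ρ) (Set.Ici c) ρ)
    (hr' : ContinuousOn r' (Set.Ici c))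
    (hr'gt : ∀ ρ ∈ Set.Ici c, 1 < r' ρ)
    (hrc : r c = 0)
    (hrpos : ∀ ρ ∈ Set.Ioi c, 0 < r ρ)
    (hrinf : Tendsto (fun ρ => r ρ / ρ) atTop (nhds 1))
    (hint : ∀ ρ ∈ Set.Ioi c,
      IntegrableOn (fun z => (z - 3 * m) / r z ^ 4) (Set.Ioi ρ))
    (A : ℝ → ℝ)
    (hA : ∀ ρ ∈ Set.Ioi c,
      A ρ = 2 * r ρ ^ 2 * ∫ z in Set.Ioi ρ, (z - 3 * m) / r z ^ 4) :
    Tendsto (fun ρ => r ρ * A ρ) (nhdsWithin c (Set.Ioi c))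
      (nhds (2 * (c - 3 * m) / (3 * r' c))) ∧
    (c ≠ 3 * m →
      Tendsto (fun ρ => A ρ / ((2 * (c - 3 * m) / (3 * r' c)) / r ρ))
        (nhdsWithin c (Set.Ioi c)) (nhds 1)) := by
  have hr'c : 1 < r' c := hr'gt c Set.self_mem_Ici
  have hR : (0:ℝ) < r' c := lt_trans one_pos hr'c
  -- Claim A: slope limit
  have hslope : Tendsto (fun ρ => r ρ / (ρ - c)) (nhdsWithin c (Set.Ioi c)) (nhds (r' c)) := by
    have h := hr c Set.self_mem_Ici
    rw [hasDerivWithinAt_iff_tendsto_slope, Set.Ici_sdiff_left] at h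
    refine h.congr fun x => ?_
    simp [slope_fun_def, hrc, div_eq_inv_mul]
  -- Claim B
  have hB := auxB c m r (r' c) hR hslope hrpos hint
  -- main limit
  have hmain : Tendsto (fun ρ => r ρ * A ρ) (nhdsWithin c (Set.Ioi c))
      (nhds (2 * (c - 3 * m) / (3 * r' c))) := by
    have hlim : Tendsto
        (fun ρ => 2 * (r ρ / (ρ - c))^3 * ((ρ-c)^3 * ∫ z in Set.Ioi ρ, (z - 3 * m) / r z ^ 4))
        (nhdsWithin c (Set.Ioi c))
        (nhds (2 * (r' c)^3 * ((c - 3*m)/(r' c)^4 / 3))) :=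
      ((hslope.pow 3).const_mul 2).mul hB
    have hval : 2 * (r' c)^3 * ((c - 3*m)/(r' c)^4 / 3) = 2 * (c - 3 * m) / (3 * r' c) := by
      field_simp
    rw [hval] at hlim
    refine hlim.congr' ?_
    filter_upwards [self_mem_nhdsWithin] with ρ hρ
    rw [hA ρ hρ]
    have h1 : ρ - c ≠ 0 := ne_of_gt (sub_pos.mpr hρ)
    field_simp
  refine ⟨hmain, fun hcm => ?_⟩
  set L : ℝ := 2 * (c - 3 * m) / (3 * r' c) with hLdef
  have hL : L ≠ 0 := by
    apply div_ne_zero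
    · have : c - 3*m ≠ 0 := sub_ne_zero.mpr hcm
      positivity
    · positivity
  have h2 : Tendsto (fun ρ => r ρ * A ρ / L) (nhdsWithin c (Set.Ioi c)) (nhds 1) := by
    have := hmain.div_const L
    rwa [div_self hL] at this
  refine h2.congr fun ρ => ?_
  have h3 : A ρ / (L / r ρ) = A ρ * r ρ / L := div_div_eq_mul_div _ _ _
  rw [h3, mul_comm (A ρ)]
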